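/- (Lemma 1.) For each N, there exist (on possibly different probability spaces) independent real random variables Y_{N,1}, …, Y_{N,N} as described; suppose constants t_{N,1}, …, t_{N,N} satisfy ∑_{i=1}^N t_{N,i}² σ_{N,i}² = 1 and max_{1 ≤ i ≤ N} t_{N,i}² ≤ C/N for a constant C > 0, and let (d_N) be a sequence of positive reals with d_N/√N → 0. Then there exists N₀ such that for all N ≥ N₀, P(∑_{i=1}^N t_{N,i}(Y_{N,i} − μ_{N,i}) > d_N) ≤ exp(−d_N²/3). -/

import Mathlib

open MeasureTheory Filter
open scoped BigOperators ENNReal NNReal Topology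

section Aux

lemma aux_taylor_bound {u₁ u₂ : ℝ} {b : ℝ → ℝ} (hb : ContDiffOn ℝ 2 b (Set.Ioo u₁ u₂))
    {θ x M : ℝ} (hθ : θ ∈ Set.Ioo u₁ u₂) (hx : x ∈ Set.Ioo u₁ u₂)
    (hM : ∀ z ∈ Set.Icc (min θ x) (max θ x), deriv (deriv b) z ≤ M) :
    b x - b θ - (x - θ) * deriv b θ ≤ M * (x - θ) ^ 2 / 2 := by
  set s : Set ℝ := Set.Ioo u₁ u₂ with hs_def
  have hs : IsOpen s := isOpen_Ioo
  have hb1 : DifferentiableOn ℝ b s := hb.differentiableOn (by norm_num)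
  have hb' : ContDiffOn ℝ 1 (deriv b) s := hb.deriv_of_isOpen hs (by norm_num)
  have hb'cont : ContinuousOn (deriv b) s := hb'.continuousOn
  have hb'diff : DifferentiableOn ℝ (deriv b) s := hb'.differentiableOn (by norm_num)
  set B : ℝ := deriv b θ with hB
  set ψ : ℝ → ℝ := fun z => M * (z - θ) - (deriv b z - B) with hψ
  set φ : ℝ → ℝ := fun z => b z - z * B - M * (z - θ) ^ 2 / 2 with hφ
  have hlo : min θ x ∈ s := by
    rcases le_total θ x with h | h
    · simpa [min_eq_left h] using hθ
    · simpa [min_eq_right h] using hx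
  have hhi : max θ x ∈ s := by
    rcases le_total θ x with h | h
    · simpa [max_eq_right h] using hx
    · simpa [max_eq_left h] using hθ
  have hDs : Set.Icc (min θ x) (max θ x) ⊆ s := Set.ordConnected_Ioo.out hlo hhi
  -- derivative of ψ
  have hψd : ∀ z ∈ s, HasDerivAt ψ (M - deriv (deriv b) z) z := by
    intro z hz
    have h1 : HasDerivAt (fun z : ℝ => M * (z - θ)) M z := by
      simpa using ((hasDerivAt_id z).sub_const θ).const_mul M
    have h2 : HasDerivAt (fun z => deriv b z - B) (deriv (deriv b) z) z := by
      exact ((hb'diff.differentiableAt (hs.mem_nhds hz)).hasDerivAt).sub_const B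
    exact h1.sub h2
  -- derivative of φ
  have hφd : ∀ z ∈ s, HasDerivAt φ (-ψ z) z := by
    intro z hz
    have h1 : HasDerivAt b (deriv b z) z :=
      (hb1.differentiableAt (hs.mem_nhds hz)).hasDerivAt
    have h2 : HasDerivAt (fun z : ℝ => z * B) B z := by
      simpa using (hasDerivAt_id z).mul_const B
    have h3 : HasDerivAt (fun z : ℝ => M * (z - θ) ^ 2 / 2) (M * (z - θ)) z := by
      have := ((((hasDerivAt_id z).sub_const θ).pow 2).const_mul M).div_const 2
      exact this.congr_deriv (by simp only [id_eq]; ring)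
    have := (h1.sub h2).sub h3
    exact this.congr_deriv (by simp only [hψ]; ring)
  -- ψ is monotone on the interval
  have hψmono : MonotoneOn ψ (Set.Icc (min θ x) (max θ x)) := by
    apply monotoneOn_of_deriv_nonneg (convex_Icc _ _)
    · exact fun z hz => ((hψd z (hDs hz)).continuousAt).continuousWithinAt
    · intro z hz
      rw [interior_Icc] at hz
      exact ((hψd z (hDs (Set.Ioo_subset_Icc_self hz))).differentiableAt).differentiableWithinAt
    · intro z hz
      rw [interior_Icc] at hz
      rw [(hψd z (hDs (Set.Ioo_subset_Icc_self hz))).deriv]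
      have := hM z (Set.Ioo_subset_Icc_self hz)
      linarith
  have hψθ : ψ θ = 0 := by simp [hψ, hB]
  have key : φ x ≤ φ θ := by
    rcases le_total θ x with h | h
    · have hmin : min θ x = θ := min_eq_left h
      have hmax : max θ x = x := max_eq_right h
      rw [hmin, hmax] at hψmono hDs
      have hanti : AntitoneOn φ (Set.Icc θ x) := by
        apply antitoneOn_of_deriv_nonpos (convex_Icc _ _)
        · exact fun z hz => ((hφd z (hDs hz)).continuousAt).continuousWithinAt
        · intro z hz
          rw [interior_Icc] at hz
          exact ((hφd z (hDs (Set.Ioo_subset_Icc_self hz))).differentiableAt).differentiableWithinAt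
        · intro z hz
          rw [interior_Icc] at hz
          rw [(hφd z (hDs (Set.Ioo_subset_Icc_self hz))).deriv]
          have h0 : ψ θ ≤ ψ z := by
            exact hψmono (Set.left_mem_Icc.2 h) (Set.Ioo_subset_Icc_self hz) hz.1.le
          rw [hψθ] at h0; linarith
      exact hanti (Set.left_mem_Icc.2 h) (Set.right_mem_Icc.2 h) h
    · have hmin : min θ x = x := min_eq_right h
      have hmax : max θ x = θ := max_eq_left h
      rw [hmin, hmax] at hψmono hDs
      have hmono : MonotoneOn φ (Set.Icc x θ) := by
        apply monotoneOn_of_deriv_nonneg (convex_Icc _ _)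
        · exact fun z hz => ((hφd z (hDs hz)).continuousAt).continuousWithinAt
        · intro z hz
          rw [interior_Icc] at hz
          exact ((hφd z (hDs (Set.Ioo_subset_Icc_self hz))).differentiableAt).differentiableWithinAt
        · intro z hz
          rw [interior_Icc] at hz
          rw [(hφd z (hDs (Set.Ioo_subset_Icc_self hz))).deriv]
          have h0 : ψ z ≤ ψ θ := by
            exact hψmono (Set.Ioo_subset_Icc_self hz) (Set.right_mem_Icc.2 h) hz.2.le
          rw [hψθ] at h0; linarith
      exact hmono (Set.left_mem_Icc.2 h) (Set.right_mem_Icc.2 h) h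
  have hx' : (x - θ) * B = x * B - θ * B := by ring
  simp only [hφ] at key
  nlinarith [key]

lemma aux_exp_integral {ν : Measure ℝ} [SigmaFinite ν] {c : ℝ → ℝ} (hc : Measurable c)
    {u₁ u₂ : ℝ} {b : ℝ → ℝ}
    (hZfin : ∀ θ ∈ Set.Ioo u₁ u₂, Integrable (fun y => Real.exp (θ * y + c y)) ν)
    (hblog : ∀ θ ∈ Set.Ioo u₁ u₂, b θ = Real.log (∫ y, Real.exp (θ * y + c y) ∂ν))
    {Ω : Type*} [MeasurableSpace Ω] {P : Measure Ω} [IsProbabilityMeasure P]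
    {Y : Ω → ℝ} (hY : Measurable Y) {θ : ℝ} (_hθ : θ ∈ Set.Ioo u₁ u₂)
    (hlaw : P.map Y = ν.withDensity (fun y => ENNReal.ofReal (Real.exp (θ * y - b θ + c y))))
    {lam : ℝ} (hlam : θ + lam ∈ Set.Ioo u₁ u₂) :
    Integrable (fun ω => Real.exp (lam * Y ω)) P ∧
      ∫ ω, Real.exp (lam * Y ω) ∂P = Real.exp (b (θ + lam) - b θ) := by
  have hν : ν ≠ 0 := by
    intro h
    have h1 : (P.map Y) Set.univ = 1 := by
      rw [Measure.map_apply hY MeasurableSet.univ]; simp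
    rw [hlaw, h] at h1
    simp at h1
  set f : ℝ → ℝ≥0 := fun y => Real.toNNReal (Real.exp (θ * y - b θ + c y)) with hf
  have hfmeas : Measurable f := by
    exact (((measurable_const.mul measurable_id).sub_const (b θ)).add hc).exp.real_toNNReal
  have hwd : ν.withDensity (fun y => ENNReal.ofReal (Real.exp (θ * y - b θ + c y)))
      = ν.withDensity (fun y => (f y : ℝ≥0∞)) := rfl
  have hgm : Measurable (fun y : ℝ => Real.exp (lam * y)) :=
    (measurable_const.mul measurable_id).exp
  have hfun : (fun y => f y • Real.exp (lam * y))
      = fun y => Real.exp (-b θ) * Real.exp ((θ + lam) * y + c y) := by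
    funext y
    simp only [NNReal.smul_def, smul_eq_mul, hf, Real.coe_toNNReal _ (Real.exp_nonneg _)]
    rw [← Real.exp_add, ← Real.exp_add]
    ring_nf
  have hint : Integrable (fun y => f y • Real.exp (lam * y)) ν := by
    rw [hfun]; exact (hZfin _ hlam).const_mul _
  have hZpos : 0 < ∫ y, Real.exp ((θ + lam) * y + c y) ∂ν := by
    rw [integral_pos_iff_support_of_nonneg (fun y => (Real.exp_pos _).le) (hZfin _ hlam)]
    have hsupp : Function.support (fun y => Real.exp ((θ + lam) * y + c y)) = Set.univ := by
      ext y; simp [Function.support, Real.exp_ne_zero]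
    rw [hsupp]
    exact Measure.measure_univ_pos.mpr hν
  constructor
  · have h1 : Integrable (fun y => Real.exp (lam * y)) (P.map Y) := by
      rw [hlaw, hwd, integrable_withDensity_iff_integrable_smul hfmeas]
      exact hint
    have h2 := (integrable_map_measure hgm.aestronglyMeasurable hY.aemeasurable).mp h1
    exact h2
  · rw [← integral_map hY.aemeasurable hgm.aestronglyMeasurable, hlaw, hwd,
      integral_withDensity_eq_integral_smul hfmeas, hfun, integral_const_mul,
      show (∫ y, Real.exp ((θ + lam) * y + c y) ∂ν) = Real.exp (b (θ + lam)) by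
        rw [hblog _ hlam, Real.exp_log hZpos],
      ← Real.exp_add]
    ring_nf

end Aux

/-- Lemma 1 of the paper: a Chernoff-type bound for weighted sums of independent
exponential-family random variables.  Here `ν` is a σ-finite base measure, `b` is the
log-partition function on an open interval `Ioo u₁ u₂` containing the compact parameter
interval `Icc a₁ a₂`; `Y N i` has natural parameter `θp N i`, mean `b'(θp N i)` and
variance `b''(θp N i)`. -/
theorem exponential_family_weighted_sum_tail_bound
    (ν : Measure ℝ) [SigmaFinite ν] (c : ℝ → ℝ) (hc : Measurable c)
    (a₁ a₂ u₁ u₂ : ℝ) (ha : a₁ ≤ a₂) (hΘ : Set.Icc a₁ a₂ ⊆ Set.Ioo u₁ u₂)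
    (b : ℝ → ℝ) (hb : ContDiffOn ℝ 2 b (Set.Ioo u₁ u₂))
    (hZfin : ∀ θ ∈ Set.Ioo u₁ u₂, Integrable (fun y => Real.exp (θ * y + c y)) ν)
    (hblog : ∀ θ ∈ Set.Ioo u₁ u₂, b θ = Real.log (∫ y, Real.exp (θ * y + c y) ∂ν))
    (Ω : ℕ → Type*) [∀ N, MeasurableSpace (Ω N)]
    (P : ∀ N, Measure (Ω N)) [∀ N, IsProbabilityMeasure (P N)]
    (Y : ∀ N : ℕ, Fin N → Ω N → ℝ)
    (hYmeas : ∀ N (i : Fin N), Measurable (Y N i))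
    (hYindep : ∀ N : ℕ,
      ProbabilityTheory.iIndepFun
        (Y N) (P N))
    (θp : ∀ N : ℕ, Fin N → ℝ)
    (hθp : ∀ N (i : Fin N), θp N i ∈ Set.Icc a₁ a₂)
    (hYlaw : ∀ N (i : Fin N), (P N).map (Y N i) =
      ν.withDensity (fun y => ENNReal.ofReal (Real.exp (θp N i * y - b (θp N i) + c y))))
    (t : ∀ N : ℕ, Fin N → ℝ)
    (ht1 : ∀ N : ℕ, 1 ≤ N → ∑ i, (t N i) ^ 2 * deriv (deriv b) (θp N i) = 1)
    (C : ℝ) (hC : 0 < C)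
    (htmax : ∀ N : ℕ, 1 ≤ N → ∀ i : Fin N, (t N i) ^ 2 ≤ C / N)
    (d : ℕ → ℝ) (hd : ∀ N, 0 < d N)
    (hdo : Tendsto (fun N : ℕ => d N / Real.sqrt N) atTop (𝓝 0)) :
    ∃ N₀ : ℕ, ∀ N ≥ N₀,
      (P N) {ω | d N < ∑ i, t N i * (Y N i ω - deriv b (θp N i))} ≤
        ENNReal.ofReal (Real.exp (-(d N) ^ 2 / 3)) := by
  classical
  have hu₁ : u₁ < a₁ := (hΘ ⟨le_refl a₁, ha⟩).1
  have hu₂ : a₂ < u₂ := (hΘ ⟨ha, le_refl a₂⟩).2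
  set δ₀ : ℝ := min (a₁ - u₁) (u₂ - a₂) / 2 with hδ₀def
  have hδ₀ : 0 < δ₀ := div_pos (lt_min (by linarith) (by linarith)) two_pos
  have hK : Set.Icc (a₁ - δ₀) (a₂ + δ₀) ⊆ Set.Ioo u₁ u₂ := by
    intro z hz
    have h1 : δ₀ ≤ (a₁ - u₁) / 2 := by
      rw [hδ₀def]; gcongr; exact min_le_left _ _
    have h2 : δ₀ ≤ (u₂ - a₂) / 2 := by
      rw [hδ₀def]; gcongr; exact min_le_right _ _
    exact ⟨by linarith [hz.1], by linarith [hz.2]⟩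
  have hb1 : ContDiffOn ℝ 1 (deriv b) (Set.Ioo u₁ u₂) :=
    hb.deriv_of_isOpen isOpen_Ioo (by norm_num)
  have hb''cont : ContinuousOn (deriv (deriv b)) (Set.Ioo u₁ u₂) :=
    hb1.continuousOn_deriv_of_isOpen isOpen_Ioo (le_refl 1)
  set ε : ℝ := 1 / (2 * C) with hεdef
  have hε : 0 < ε := by positivity
  have huc : UniformContinuousOn (deriv (deriv b)) (Set.Icc (a₁ - δ₀) (a₂ + δ₀)) :=
    isCompact_Icc.uniformContinuousOn_of_continuous (hb''cont.mono hK)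
  obtain ⟨δ₁, hδ₁pos, hδ₁⟩ := Metric.uniformContinuousOn_iff.mp huc ε hε
  set δ : ℝ := min δ₀ (δ₁ / 2) with hδdef
  have hδpos : 0 < δ := lt_min hδ₀ (by linarith)
  have hsC : 0 < Real.sqrt C := Real.sqrt_pos.mpr hC
  set r : ℝ := 3 * δ / (2 * Real.sqrt C) with hrdef
  have hr : 0 < r := by positivity
  have hev : ∀ᶠ N in atTop, |d N / Real.sqrt N| < r := by
    have h := hdo.eventually (Metric.ball_mem_nhds (0 : ℝ) hr)
    filter_upwards [h] with N hN
    have h2 := Metric.mem_ball.mp hN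
    rwa [Real.dist_eq, sub_zero] at h2
  obtain ⟨N₁, hN₁⟩ := eventually_atTop.mp hev
  refine ⟨max N₁ 1, fun N hN => ?_⟩
  have hN1 : 1 ≤ N := le_trans (le_max_right _ _) hN
  have hNd : |d N / Real.sqrt N| < r := hN₁ N (le_trans (le_max_left _ _) hN)
  have hNpos : (0 : ℝ) < N := by exact_mod_cast hN1
  have hsN : 0 < Real.sqrt N := Real.sqrt_pos.mpr hNpos
  have hdN : 0 < d N := hd N
  have hdr : d N / Real.sqrt N < r := by
    rwa [abs_of_pos (div_pos hdN hsN)] at hNd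
  set s : ℝ := 2 / 3 * d N with hsdef
  have hspos : 0 < s := by positivity
  set lam : Fin N → ℝ := fun i => s * t N i with hlamdef
  have hlam_abs : ∀ i, |lam i| ≤ δ := by
    intro i
    have h1 : |t N i| ≤ Real.sqrt C / Real.sqrt N := by
      have h2 : |t N i| = Real.sqrt ((t N i) ^ 2) := (Real.sqrt_sq_eq_abs _).symm
      rw [h2, ← Real.sqrt_div hC.le]
      exact Real.sqrt_le_sqrt (htmax N hN1 i)
    calc |lam i| = s * |t N i| := by
          rw [hlamdef]; simp [abs_mul, abs_of_pos hspos]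
      _ ≤ s * (Real.sqrt C / Real.sqrt N) := by
          exact mul_le_mul_of_nonneg_left h1 hspos.le
      _ = (2 / 3 * Real.sqrt C) * (d N / Real.sqrt N) := by rw [hsdef]; ring
      _ ≤ (2 / 3 * Real.sqrt C) * r := by
          apply mul_le_mul_of_nonneg_left hdr.le
          positivity
      _ = δ := by rw [hrdef]; field_simp
  have hδδ₀ : δ ≤ δ₀ := min_le_left _ _
  have hδδ₁ : δ < δ₁ := lt_of_le_of_lt (min_le_right _ _) (by linarith)
  have hθK : ∀ i, θp N i ∈ Set.Icc (a₁ - δ₀) (a₂ + δ₀) := fun i =>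
    ⟨by linarith [(hθp N i).1], by linarith [(hθp N i).2]⟩
  have hθIoo : ∀ i, θp N i ∈ Set.Ioo u₁ u₂ := fun i => hΘ (hθp N i)
  have hIcc : ∀ i, Set.Icc (min (θp N i) (θp N i + lam i)) (max (θp N i) (θp N i + lam i))
      ⊆ Set.Icc (a₁ - δ₀) (a₂ + δ₀) := by
    intro i z hz
    obtain ⟨ha1, ha2⟩ := abs_le.mp (hlam_abs i)
    obtain ⟨hθ1, hθ2⟩ := hθp N i
    have hmin : a₁ - δ₀ ≤ min (θp N i) (θp N i + lam i) :=
      le_min (by linarith) (by linarith)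
    have hmax : max (θp N i) (θp N i + lam i) ≤ a₂ + δ₀ :=
      max_le (by linarith) (by linarith)
    exact ⟨le_trans hmin hz.1, le_trans hz.2 hmax⟩
  have hlamIoo : ∀ i, θp N i + lam i ∈ Set.Ioo u₁ u₂ := fun i =>
    hK (hIcc i ⟨min_le_right _ _, le_max_right _ _⟩)
  have hM : ∀ i, ∀ z ∈ Set.Icc (min (θp N i) (θp N i + lam i))
      (max (θp N i) (θp N i + lam i)),
      deriv (deriv b) z ≤ deriv (deriv b) (θp N i) + ε := by
    intro i z hz
    have hzK := hIcc i hz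
    obtain ⟨ha1, ha2⟩ := abs_le.mp (hlam_abs i)
    have hz1 : θp N i - δ ≤ z :=
      le_trans (le_min (by linarith) (by linarith)) hz.1
    have hz2 : z ≤ θp N i + δ :=
      le_trans hz.2 (max_le (by linarith) (by linarith))
    have hdist : dist z (θp N i) < δ₁ := by
      rw [Real.dist_eq]
      exact lt_of_le_of_lt (abs_le.mpr ⟨by linarith, by linarith⟩) hδδ₁
    have hkey := hδ₁ z hzK (θp N i) (hθK i) hdist
    rw [Real.dist_eq] at hkey
    linarith [(abs_lt.mp hkey).2]
  have htay : ∀ i, b (θp N i + lam i) - b (θp N i) - lam i * deriv b (θp N i)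
      ≤ (deriv (deriv b) (θp N i) + ε) * lam i ^ 2 / 2 := by
    intro i
    have h := aux_taylor_bound hb (hθIoo i) (hlamIoo i) (hM i)
    simpa [add_sub_cancel_left] using h
  set X : Fin N → Ω N → ℝ := fun i ω => t N i * (Y N i ω - deriv b (θp N i)) with hXdef
  have hXmeas : ∀ i, Measurable (X i) := fun i => ((hYmeas N i).sub_const _).const_mul _
  have hXindep : ProbabilityTheory.iIndepFun
      X (P N) := by
    have h := (hYindep N).comp (fun i y => t N i * (y - deriv b (θp N i)))
      (fun i => (measurable_id.sub_const _).const_mul _)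
    exact h
  have hmgf : ∀ i : Fin N, Integrable (fun ω => Real.exp (s * X i ω)) (P N) ∧
      ProbabilityTheory.mgf (X i) (P N) s
        ≤ Real.exp ((deriv (deriv b) (θp N i) + ε) * s ^ 2 * (t N i) ^ 2 / 2) := by
    intro i
    obtain ⟨hint, hval⟩ := aux_exp_integral hc hZfin hblog (hYmeas N i) (hθIoo i)
      (hYlaw N i) (hlamIoo i)
    have hfuneq : (fun ω => Real.exp (s * X i ω))
        = fun ω => Real.exp (-(lam i * deriv b (θp N i))) * Real.exp (lam i * Y N i ω) := by
      funext ω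
      rw [← Real.exp_add]
      congr 1
      simp only [hXdef, hlamdef]
      ring
    constructor
    · rw [hfuneq]; exact hint.const_mul _
    · have hmval : ProbabilityTheory.mgf (X i) (P N) s
          = Real.exp (b (θp N i + lam i) - b (θp N i) - lam i * deriv b (θp N i)) := by
        rw [ProbabilityTheory.mgf, hfuneq, integral_const_mul, hval, ← Real.exp_add]
        ring_nf
      rw [hmval]
      apply Real.exp_le_exp.mpr
      have h1 := htay i
      have h2 : (deriv (deriv b) (θp N i) + ε) * lam i ^ 2 / 2
          = (deriv (deriv b) (θp N i) + ε) * s ^ 2 * (t N i) ^ 2 / 2 := by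
        rw [hlamdef]; ring
      linarith
  have hintS : Integrable (fun ω => Real.exp (s * (∑ i, X i) ω)) (P N) :=
    hXindep.integrable_exp_mul_sum hXmeas (fun i _ => (hmgf i).1)
  have hch := ProbabilityTheory.measure_ge_le_exp_mul_mgf (X := ∑ i, X i) (μ := P N)
    (d N) hspos.le hintS
  have hprod : ProbabilityTheory.mgf (∑ i, X i) (P N) s ≤ Real.exp (3 / 4 * s ^ 2) := by
    rw [hXindep.mgf_sum hXmeas Finset.univ]
    calc ∏ i, ProbabilityTheory.mgf (X i) (P N) s
        ≤ ∏ i, Real.exp ((deriv (deriv b) (θp N i) + ε) * s ^ 2 * (t N i) ^ 2 / 2) :=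
          Finset.prod_le_prod (fun i _ => ProbabilityTheory.mgf_nonneg)
            (fun i _ => (hmgf i).2)
      _ = Real.exp (∑ i, (deriv (deriv b) (θp N i) + ε) * s ^ 2 * (t N i) ^ 2 / 2) :=
          (Real.exp_sum _ _).symm
      _ ≤ Real.exp (3 / 4 * s ^ 2) := by
          apply Real.exp_le_exp.mpr
          have hsum1 := ht1 N hN1
          have hsum2 : ∑ i, (t N i) ^ 2 ≤ C := by
            calc ∑ i, (t N i) ^ 2 ≤ ∑ _i : Fin N, C / N :=
                Finset.sum_le_sum (fun i _ => htmax N hN1 i)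
              _ = C := by
                rw [Finset.sum_const, Finset.card_univ, Fintype.card_fin, nsmul_eq_mul]
                field_simp
          have heq : ∑ i, (deriv (deriv b) (θp N i) + ε) * s ^ 2 * (t N i) ^ 2 / 2
              = s ^ 2 / 2 * ((∑ i, (t N i) ^ 2 * deriv (deriv b) (θp N i))
                + ε * ∑ i, (t N i) ^ 2) := by
            have hterm : ∀ i : Fin N, (deriv (deriv b) (θp N i) + ε) * s ^ 2 * (t N i) ^ 2 / 2
                = s ^ 2 / 2 * ((t N i) ^ 2 * deriv (deriv b) (θp N i))
                  + s ^ 2 / 2 * (ε * (t N i) ^ 2) := fun i => by ring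
            rw [Finset.sum_congr rfl (fun i _ => hterm i), Finset.sum_add_distrib,
              ← Finset.mul_sum, ← Finset.mul_sum]
            rw [show ε * ∑ i, (t N i) ^ 2 = ∑ i, ε * (t N i) ^ 2 from Finset.mul_sum _ _ _]
            ring
          rw [heq, hsum1]
          have hεsum : ε * ∑ i, (t N i) ^ 2 ≤ 1 / 2 := by
            have h3 : ε * ∑ i, (t N i) ^ 2 ≤ ε * C :=
              mul_le_mul_of_nonneg_left hsum2 hε.le
            have h4 : ε * C = 1 / 2 := by rw [hεdef]; field_simp
            linarith
          nlinarith [sq_nonneg s]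
  have hfinal : Real.exp (-s * d N) * ProbabilityTheory.mgf (∑ i, X i) (P N) s
      ≤ Real.exp (-(d N) ^ 2 / 3) := by
    calc Real.exp (-s * d N) * ProbabilityTheory.mgf (∑ i, X i) (P N) s
        ≤ Real.exp (-s * d N) * Real.exp (3 / 4 * s ^ 2) :=
          mul_le_mul_of_nonneg_left hprod (Real.exp_nonneg _)
      _ = Real.exp (-s * d N + 3 / 4 * s ^ 2) := (Real.exp_add _ _).symm
      _ = Real.exp (-(d N) ^ 2 / 3) := by
          rw [hsdef]; congr 1; ring
  have hsub : {ω | d N < ∑ i, t N i * (Y N i ω - deriv b (θp N i))}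
      ⊆ {ω | d N ≤ (∑ i, X i) ω} := by
    intro ω hω
    simp only [Set.mem_setOf_eq, Finset.sum_apply] at *
    exact le_of_lt hω
  refine le_trans (measure_mono hsub) ?_
  rw [ENNReal.le_ofReal_iff_toReal_le (measure_ne_top _ _) (Real.exp_nonneg _)]
  exact le_trans hch hfinal
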